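/- Suppose Φ : ℝ → ℝ is injective with Φ'(x) ≥ 9/10 and |Φ(x) − x| ≤ 10⁻⁴ for all x, and let Ψ(x,y) = (Φ(x), 1/2 + y/Φ'(x)). If D ⊂ ℝ² is any disk of radius 1/3, then Ψ(D) is aperiodic: the difference of any two points of Ψ(D) is never a nonzero integer vector. -/

import Mathlib

theorem stmt2 (Φ : ℝ → ℝ) (hdiff : Differentiable ℝ Φ) (hinj : Function.Injective Φ)
    (hd : ∀ x, 9/10 ≤ deriv Φ x) (hdisp : ∀ x, |Φ x - x| ≤ 1 / 10^4)
    (Ψ : ℝ × ℝ → ℝ × ℝ)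
    (hΨ : ∀ p : ℝ × ℝ, Ψ p = (Φ p.1, 1/2 + p.2 / deriv Φ p.1))
    (c : ℝ × ℝ) :
    ∀ p q : ℝ × ℝ,
      (p.1 - c.1)^2 + (p.2 - c.2)^2 ≤ (1/3)^2 →
      (q.1 - c.1)^2 + (q.2 - c.2)^2 ≤ (1/3)^2 →
      (∃ m n : ℤ, Ψ p - Ψ q = ((m : ℝ), (n : ℝ))) → Ψ p = Ψ q := by
  intro p q hp hq ⟨m, n, hmn⟩
  have hp1 : |p.1 - c.1| ≤ 1/3 := by
    have := sq_nonneg (p.2 - c.2); rw [abs_le]; constructor <;> nlinarith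
  have hq1 : |q.1 - c.1| ≤ 1/3 := by
    have := sq_nonneg (q.2 - c.2); rw [abs_le]; constructor <;> nlinarith
  have hp2 : |p.2 - c.2| ≤ 1/3 := by
    have := sq_nonneg (p.1 - c.1); rw [abs_le]; constructor <;> nlinarith
  have hq2 : |q.2 - c.2| ≤ 1/3 := by
    have := sq_nonneg (q.1 - c.1); rw [abs_le]; constructor <;> nlinarith
  have h1 : Ψ p - Ψ q = ((m : ℝ), (n : ℝ)) := hmn
  have hm : (m : ℝ) = Φ p.1 - Φ q.1 := by
    have := congrArg Prod.fst h1
    simp [hΨ, Prod.sub_def] at this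
    linarith
  have hdp := hdisp p.1
  have hdq := hdisp q.1
  have habs : |(m : ℝ)| < 1 := by
    rw [hm]
    have : Φ p.1 - Φ q.1 = (Φ p.1 - p.1) - (Φ q.1 - q.1) + ((p.1 - c.1) - (q.1 - c.1)) := by ring
    rw [this]
    calc |(Φ p.1 - p.1) - (Φ q.1 - q.1) + ((p.1 - c.1) - (q.1 - c.1))|
        ≤ |Φ p.1 - p.1| + |Φ q.1 - q.1| + (|p.1 - c.1| + |q.1 - c.1|) := by
          have := abs_add_le ((Φ p.1 - p.1) - (Φ q.1 - q.1)) ((p.1 - c.1) - (q.1 - c.1))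
          have := abs_sub (Φ p.1 - p.1) (Φ q.1 - q.1)
          have := abs_sub (p.1 - c.1) (q.1 - c.1)
          linarith
      _ < 1 := by norm_num at hdp hdq ⊢; linarith
  have hm0 : m = 0 := by
    have h : ((|m| : ℤ) : ℝ) < 1 := by rw [Int.cast_abs]; exact habs
    have : |m| < 1 := by exact_mod_cast h
    have := abs_lt.mp this
    omega
  have hΦeq : Φ p.1 = Φ q.1 := by
    rw [hm0] at hm; push_cast at hm; linarith
  have hx : p.1 = q.1 := hinj hΦeq
  have hdpos : (0:ℝ) < deriv Φ p.1 := lt_of_lt_of_le (by norm_num) (hd p.1)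
  have hn : (n : ℝ) * deriv Φ p.1 = p.2 - q.2 := by
    have := congrArg Prod.snd h1
    simp [hΨ, Prod.sub_def, hx] at this
    have h2 : p.2 / deriv Φ p.1 - q.2 / deriv Φ p.1 = (n:ℝ) := by rw [← hx] at this; linarith
    field_simp at h2
    linarith
  have hnabs : |(n : ℝ)| < 1 := by
    have h23 : |p.2 - q.2| ≤ 2/3 := by
      have := abs_sub (p.2 - c.2) (q.2 - c.2)
      have : |p.2 - q.2| ≤ |p.2 - c.2| + |q.2 - c.2| := by
        calc |p.2 - q.2| = |(p.2 - c.2) - (q.2 - c.2)| := by ring_nf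
          _ ≤ _ := abs_sub _ _
      linarith
    have : |(n : ℝ)| * deriv Φ p.1 ≤ 2/3 := by
      rw [← abs_of_pos hdpos, ← abs_mul, hn]; exact h23
    nlinarith [hd p.1, abs_nonneg ((n:ℝ))]
  have hn0 : n = 0 := by
    have h : ((|n| : ℤ) : ℝ) < 1 := by rw [Int.cast_abs]; exact hnabs
    have : |n| < 1 := by exact_mod_cast h
    have := abs_lt.mp this
    omega
  rw [hm0, hn0] at h1
  have : Ψ p - Ψ q = 0 := by rw [h1]; ext <;> simp
  exact sub_eq_zero.mp this
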